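/- arXiv:2212.08053 — 2 statements merged into one kernel-verified Lean document; each statement's English description precedes it below -/
import Mathlib

section
/- Let ε > 0 and let f_ε : (-ε, ε) → ℝ be given by f_ε(s) = -(π/(2ε))·tan(πs/(2ε)). If u : (-ε, ε) → ℂ is differentiable, satisfies u'(s) = -f_ε(s)·u(s) for every s ∈ (-ε, ε), and is square-integrable on (-ε, ε) (∫_{-ε}^{ε} |u(s)|² ds < ∞), then u is identically zero. -/
open Real MeasureTheory

/-- The potential `f_ε(s) = -(π/(2ε))·tan(πs/(2ε))`. -/
noncomputable def fEps (ε s : ℝ) : ℝ := -(π / (2 * ε)) * Real.tan (π * s / (2 * ε))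

/-- A differentiable, square-integrable solution of `u' = -f_ε · u` on `(-ε, ε)`
vanishes identically. -/
theorem stmt4 (ε : ℝ) (hε : 0 < ε) (u : ℝ → ℂ)
    (hu : ∀ s ∈ Set.Ioo (-ε) ε, HasDerivAt u ((-fEps ε s : ℂ) * u s) s)
    (hL2 : MeasureTheory.IntegrableOn (fun s : ℝ => ‖u s‖ ^ 2) (Set.Ioo (-ε) ε)) :
    ∀ s ∈ Set.Ioo (-ε) ε, u s = 0 := by
  have hεne : (2 : ℝ) * ε ≠ 0 := by positivity
  obtain ⟨c, hc⟩ : ∃ c : ℝ, c = π / (2 * ε) := ⟨_, rfl⟩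
  have hcpos : 0 < c := hc ▸ div_pos pi_pos (by linarith)
  have hcε : c * ε = π / 2 := by rw [hc]; field_simp
  have harg : ∀ t, π * t / (2 * ε) = c * t := by
    intro t; rw [hc, div_mul_eq_mul_div]
  have hθ : ∀ t ∈ Set.Ioo (-ε) ε, c * t ∈ Set.Ioo (-(π/2)) (π/2) := by
    intro t ht
    constructor
    · nlinarith [ht.1, hcpos]
    · nlinarith [ht.2, hcpos]
  have hcos : ∀ t ∈ Set.Ioo (-ε) ε, 0 < Real.cos (c * t) := fun t ht =>
    Real.cos_pos_of_mem_Ioo (hθ t ht)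
  -- the product v = u * cos(c t) has zero derivative on the interval
  set v : ℝ → ℂ := fun t => u t * (Real.cos (c * t) : ℂ) with hv
  have hcosd : ∀ t : ℝ, HasDerivAt (fun t => Real.cos (c * t)) (-(c * Real.sin (c * t))) t := by
    intro t
    have h1 : HasDerivAt (fun t : ℝ => c * t) c t := by
      simpa using (hasDerivAt_id t).const_mul c
    have := (Real.hasDerivAt_cos (c * t)).comp t h1
    exact this.congr_deriv (by ring)
  have hvd : ∀ t ∈ Set.Ioo (-ε) ε, HasDerivAt v 0 t := by
    intro t ht
    have hut := hu t ht
    have hcd : HasDerivAt (fun t : ℝ => (Real.cos (c * t) : ℂ))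
        ((-(c * Real.sin (c * t)) : ℝ) : ℂ) t := (hcosd t).ofReal_comp
    have := hut.mul hcd
    refine this.congr_deriv ?_
    have htan : Real.tan (c * t) * Real.cos (c * t) = Real.sin (c * t) :=
      Real.tan_mul_cos (ne_of_gt (hcos t ht))
    have hfe : fEps ε t = -(c * Real.tan (c * t)) := by rw [fEps, harg, ← hc]; ring
    rw [hfe]
    push_cast [← htan]
    ring
  -- v is constant on the interval
  have h0mem : (0 : ℝ) ∈ Set.Ioo (-ε) ε := by constructor <;> linarith
  have hopen : IsOpen (Set.Ioo (-ε) ε) := isOpen_Ioo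
  have hconst : ∀ t ∈ Set.Ioo (-ε) ε, v t = v 0 := by
    intro t ht
    apply (convex_Ioo (-ε) ε).is_const_of_fderivWithin_eq_zero (𝕜 := ℝ)
      (fun x hx => ((hvd x hx).differentiableAt.differentiableWithinAt)) _ ht h0mem
    intro x hx
    rw [fderivWithin_of_isOpen hopen hx, (hvd x hx).hasFDerivAt.fderiv]
    ext
    simp
  obtain ⟨C, hC⟩ : ∃ C : ℂ, C = u 0 := ⟨_, rfl⟩
  have hv0 : v 0 = C := by simp [hv, hC]
  have hkey : ∀ t ∈ Set.Ioo (-ε) ε, u t * (Real.cos (c * t) : ℂ) = C := by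
    intro t ht; rw [← hv0]; exact hconst t ht
  intro s hs
  by_cases hCz : C = 0
  · have := hkey s hs
    rw [hCz] at this
    rcases mul_eq_zero.mp this with h | h
    · exact h
    · exact absurd (by exact_mod_cast h) (ne_of_gt (hcos s hs))
  -- contradiction in the nonzero case
  exfalso
  have hnorm : ∀ t ∈ Set.Ioo (-ε) ε, ‖u t‖ ^ 2 = ‖C‖ ^ 2 / Real.cos (c * t) ^ 2 := by
    intro t ht
    have hcne : Real.cos (c * t) ≠ 0 := ne_of_gt (hcos t ht)
    have h1 : ‖u t‖ * Real.cos (c * t) = ‖C‖ := by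
      have := congrArg norm (hkey t ht)
      rwa [norm_mul, Complex.norm_real, Real.norm_eq_abs,
        abs_of_pos (hcos t ht)] at this
    have h2 : ‖u t‖ = ‖C‖ / Real.cos (c * t) := by
      rw [eq_div_iff hcne]; exact h1
    rw [h2, div_pow]
  obtain ⟨M, hM⟩ : ∃ M : ℝ, M = ∫ t in Set.Ioo (-ε) ε, ‖u t‖ ^ 2 := ⟨_, rfl⟩
  have hCnorm : 0 < ‖C‖ ^ 2 := by
    have : 0 < ‖C‖ := norm_pos_iff.mpr hCz
    positivity
  have hMnonneg : 0 ≤ M := by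
    rw [hM]
    apply setIntegral_nonneg measurableSet_Ioo
    intro x _; positivity
  obtain ⟨K, hK⟩ : ∃ K : ℝ, K = (M + 1) * c / (2 * ‖C‖ ^ 2) := ⟨_, rfl⟩
  have hKpos : 0 < K := by
    rw [hK]
    exact div_pos (mul_pos (by linarith) hcpos) (by linarith)
  obtain ⟨a, ha⟩ : ∃ a : ℝ, a = Real.arctan K / c := ⟨_, rfl⟩
  have hapos : 0 < a := by
    rw [ha]
    apply div_pos _ hcpos
    rw [← Real.arctan_zero]
    exact Real.arctan_strictMono hKpos
  have haε : a < ε := by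
    have h1 : Real.arctan K < π / 2 := Real.arctan_lt_pi_div_two K
    rw [ha, div_lt_iff₀ hcpos]
    nlinarith [hcε]
  have hca : c * a = Real.arctan K := by
    rw [ha]; field_simp
  have hsub : Set.Icc (-a) a ⊆ Set.Ioo (-ε) ε := by
    intro x hx
    constructor
    · linarith [hx.1]
    · linarith [hx.2]
  -- FTC computation
  set g : ℝ → ℝ := fun t => ‖C‖ ^ 2 / Real.cos (c * t) ^ 2 with hg
  set F : ℝ → ℝ := fun t => ‖C‖ ^ 2 * Real.tan (c * t) / c with hF
  have hFd : ∀ t ∈ Set.Ioo (-ε) ε, HasDerivAt F (g t) t := by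
    intro t ht
    have h1 : HasDerivAt (fun t : ℝ => c * t) c t := by
      simpa using (hasDerivAt_id t).const_mul c
    have h2 := (Real.hasDerivAt_tan (ne_of_gt (hcos t ht))).comp t h1
    have h3 := (h2.const_mul (‖C‖ ^ 2)).div_const c
    refine h3.congr_deriv ?_
    show ‖C‖ ^ 2 * (1 / Real.cos (c * t) ^ 2 * c) / c = ‖C‖ ^ 2 / Real.cos (c * t) ^ 2
    field_simp
  have hIcc : MeasurableSet (Set.Icc (-a) a) := measurableSet_Icc
  have hint_u : IntegrableOn (fun t : ℝ => ‖u t‖ ^ 2) (Set.Icc (-a) a) :=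
    hL2.mono_set hsub
  have hint_g : IntegrableOn g (Set.Icc (-a) a) := by
    apply hint_u.congr_fun _ hIcc
    intro x hx; exact hnorm x (hsub hx)
  have haa : -a ≤ a := by linarith
  have huIcc : Set.uIcc (-a) a = Set.Icc (-a) a := Set.uIcc_of_le haa
  have hftc : ∫ t in (-a)..a, g t = F a - F (-a) := by
    apply intervalIntegral.integral_eq_sub_of_hasDerivAt
    · intro x hx
      rw [huIcc] at hx
      exact hFd x (hsub hx)
    · rw [intervalIntegrable_iff_integrableOn_Icc_of_le haa]
      exact hint_g
  have hval : F a - F (-a) = M + 1 := by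
    show ‖C‖ ^ 2 * Real.tan (c * a) / c - ‖C‖ ^ 2 * Real.tan (c * (-a)) / c = M + 1
    have hCne : ‖C‖ ≠ 0 := ne_of_gt (norm_pos_iff.mpr hCz)
    have hcne : c ≠ 0 := ne_of_gt hcpos
    have hA : ‖C‖ ≠ 0 := hCne
    rw [mul_neg, Real.tan_neg, hca, Real.tan_arctan, hK]
    field_simp [hA, hcne]
    ring
  -- integral comparison
  have hIoc_sub : Set.Ioc (-a) a ⊆ Set.Ioo (-ε) ε := fun x hx =>
    hsub ⟨le_of_lt hx.1, hx.2⟩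
  have hmono : ∫ t in Set.Ioc (-a) a, ‖u t‖ ^ 2 ≤ M := by
    rw [hM]
    apply setIntegral_mono_set hL2
    · filter_upwards with x using by positivity
    · exact Filter.Eventually.of_forall hIoc_sub
  have hcongr : ∫ t in Set.Ioc (-a) a, g t = ∫ t in Set.Ioc (-a) a, ‖u t‖ ^ 2 := by
    apply setIntegral_congr_fun measurableSet_Ioc
    intro x hx
    exact (hnorm x (hIoc_sub hx)).symm
  have : M + 1 ≤ M := by
    calc M + 1 = F a - F (-a) := hval.symm
    _ = ∫ t in (-a)..a, g t := hftc.symm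
    _ = ∫ t in Set.Ioc (-a) a, g t := intervalIntegral.integral_of_le haa
    _ = ∫ t in Set.Ioc (-a) a, ‖u t‖ ^ 2 := hcongr
    _ ≤ M := hmono
  linarith
end

section
/- Let ε > 0 and let f_ε : (-ε, ε) → ℝ be given by f_ε(s) = -(π/(2ε))·tan(πs/(2ε)). The ℂ-linear map sending C ∈ ℂ to the function s ↦ C·cos(πs/(2ε)) is a bijection from ℂ onto the set of differentiable, square-integrable functions u : (-ε, ε) → ℂ satisfying u'(s) = f_ε(s)·u(s) for all s ∈ (-ε, ε). In particular this solution space is a one-dimensional complex vector space. -/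
open Real MeasureTheory

private lemma stmt5_cos_pos (ε s : ℝ) (hε : 0 < ε) (hs : s ∈ Set.Ioo (-ε) ε) :
    0 < Real.cos (π * s / (2 * ε)) := by
  apply Real.cos_pos_of_mem_Ioo
  constructor
  · rw [lt_div_iff₀ (by positivity)]
    nlinarith [Real.pi_pos, hs.1]
  · rw [div_lt_div_iff₀ (by positivity) (by norm_num)]
    nlinarith [Real.pi_pos, hs.2]

private lemma stmt5_hasDerivAt_ccos (ε : ℝ) (hε : 0 < ε) (s : ℝ) :
    HasDerivAt (fun s : ℝ => (Real.cos (π * s / (2 * ε)) : ℂ))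
      (↑(-(π / (2 * ε)) * Real.sin (π * s / (2 * ε)))) s := by
  have h1 : HasDerivAt (fun s : ℝ => π * s / (2 * ε)) (π / (2 * ε)) s := by
    simpa [mul_div_assoc, mul_comm] using
      ((hasDerivAt_id s).const_mul (π / (2 * ε)))
  have h2 := (Real.hasDerivAt_cos (π * s / (2 * ε))).comp s h1
  have := h2.ofReal_comp
  refine this.congr_deriv (Eq.symm ?_)
  push_cast
  ring

/-- The map `C ↦ (s ↦ C·cos(πs/(2ε)))` is a bijection from `ℂ` onto the set of
(restrictions to `(-ε, ε)` of) differentiable, square-integrable solutions of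
`u' = f_ε · u` on `(-ε, ε)`; in particular this solution space is a
one-dimensional complex vector space. -/
theorem stmt5 (ε : ℝ) (hε : 0 < ε) :
    Set.BijOn
      (fun C : ℂ => fun s : ↥(Set.Ioo (-ε) ε) =>
        C * (Real.cos (π * (s : ℝ) / (2 * ε)) : ℂ))
      Set.univ
      {g : ↥(Set.Ioo (-ε) ε) → ℂ | ∃ u : ℝ → ℂ,
        (∀ s ∈ Set.Ioo (-ε) ε, HasDerivAt u ((fEps ε s : ℂ) * u s) s) ∧
        MeasureTheory.IntegrableOn (fun s : ℝ => ‖u s‖ ^ 2) (Set.Ioo (-ε) ε) ∧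
        ∀ s : ↥(Set.Ioo (-ε) ε), g s = u (s : ℝ)} := by
  have hmem0 : (0 : ℝ) ∈ Set.Ioo (-ε) ε := ⟨by linarith, hε⟩
  refine ⟨?_, ?_, ?_⟩
  · -- MapsTo
    intro C _
    refine ⟨fun s => C * (Real.cos (π * s / (2 * ε)) : ℂ), ?_, ?_, fun s => rfl⟩
    · intro s hs
      have hc := stmt5_cos_pos ε s hε hs
      have hcC : (Real.cos (π * s / (2 * ε)) : ℂ) ≠ 0 := by exact_mod_cast hc.ne'
      have hd := (stmt5_hasDerivAt_ccos ε hε s).const_mul C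
      refine hd.congr_deriv (Eq.symm ?_)
      have hR : fEps ε s * Real.cos (π * s / (2 * ε))
          = -(π / (2 * ε)) * Real.sin (π * s / (2 * ε)) := by
        have hcR : Real.cos (π * s / (2 * ε)) ≠ 0 := hc.ne'
        rw [fEps, Real.tan_eq_sin_div_cos]
        field_simp
      have key : (fEps ε s : ℂ) * (Real.cos (π * s / (2 * ε)) : ℂ)
          = ((-(π / (2 * ε)) * Real.sin (π * s / (2 * ε)) : ℝ) : ℂ) := by
        rw [← Complex.ofReal_mul, hR]
      linear_combination C * key
    · refine (Continuous.integrableOn_Icc ?_).mono_set Set.Ioo_subset_Icc_self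
      fun_prop
  · -- InjOn
    intro C _ C' _ h
    have := congrFun h ⟨0, hmem0⟩
    simpa using this
  · -- SurjOn
    rintro g ⟨u, hODE, -, hgu⟩
    set c : ℝ → ℂ := fun s => (Real.cos (π * s / (2 * ε)) : ℂ) with hcdef
    have hcne : ∀ s ∈ Set.Ioo (-ε) ε, c s ≠ 0 := fun s hs => by
      simp only [hcdef]
      exact_mod_cast (stmt5_cos_pos ε s hε hs).ne'
    have hw : ∀ s ∈ Set.Ioo (-ε) ε, HasDerivAt (fun t => u t / c t) 0 s := by
      intro s hs
      have hcs := hcne s hs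
      have hd := (hODE s hs).div (stmt5_hasDerivAt_ccos ε hε s) hcs
      refine hd.congr_deriv (Eq.symm ?_)
      have hR : fEps ε s * Real.cos (π * s / (2 * ε))
          = -(π / (2 * ε)) * Real.sin (π * s / (2 * ε)) := by
        have hcR : Real.cos (π * s / (2 * ε)) ≠ 0 := (stmt5_cos_pos ε s hε hs).ne'
        rw [fEps, Real.tan_eq_sin_div_cos]
        field_simp
      have key : (fEps ε s : ℂ) * c s
          = ((-(π / (2 * ε)) * Real.sin (π * s / (2 * ε)) : ℝ) : ℂ) := by
        simp only [hcdef]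
        rw [← Complex.ofReal_mul, hR]
      rw [eq_comm, div_eq_zero_iff]
      left
      linear_combination u s * key
    have hconst : ∀ s ∈ Set.Ioo (-ε) ε, u s / c s = u 0 / c 0 := by
      intro s hs
      refine (convex_Ioo (-ε) ε).is_const_of_fderivWithin_eq_zero
        (f := fun t => u t / c t)
        (fun t ht => (hw t ht).differentiableAt.differentiableWithinAt)
        (fun t ht => ?_) hs hmem0
      rw [fderivWithin_eq_fderiv (isOpen_Ioo.uniqueDiffWithinAt ht)
        (hw t ht).differentiableAt, (hw t ht).hasFDerivAt.fderiv]
      ext v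
      simp

    have hc0 : c 0 = 1 := by simp [hcdef]
    refine ⟨u 0, Set.mem_univ _, ?_⟩
    funext s
    rw [hgu s]
    have hs := s.2
    have := hconst (s : ℝ) hs
    rw [hc0, div_one] at this
    rw [div_eq_iff (hcne (s : ℝ) hs)] at this
    rw [this]
end
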